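/- Let u be a word of length n with t > 0, and let q be a queue. Suppose the word q(u) has at least one letter equal to t, is weakly decreasing up to level t, and has exactly |q| letters that are at most t. Then the word u is weakly decreasing up to level t − 1. -/

import Mathlib

open scoped BigOperators Classical

namespace MLQ

/-- Words of length `n` over the positive integers (letters are natural numbers,
with `0` unused). Sites are elements of `Fin n`, thought of cyclically. -/
abbrev Word (n : ℕ) := Fin n → ℕ

variable {n : ℕ}

section Cyclic

variable [NeZero n]

/-- the site `s` steps (cyclically) to the right of `i` -/
def shiftR (i : Fin n) (s : ℕ) : Fin n :=
  ⟨(i.val + s) % n, Nat.mod_lt _ (Nat.pos_of_ne_zero (NeZero.ne n))⟩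

/-- the site `s` steps (cyclically) to the left of `i` -/
def shiftL (i : Fin n) (s : ℕ) : Fin n :=
  ⟨(i.val + n - s % n) % n, Nat.mod_lt _ (Nat.pos_of_ne_zero (NeZero.ne n))⟩

/-- number of steps to go (cyclically) right from `i` to `j` -/
def cdistR (i j : Fin n) : ℕ := (j.val + n - i.val) % n

/-- number of steps to go (cyclically) left from `i` to `j` -/
def cdistL (i j : Fin n) : ℕ := (i.val + n - j.val) % n

/-- first site of `s` weakly to the right (cyclically) of `i` -/
noncomputable def firstRight (i : Fin n) (s : Finset (Fin n)) (h : s.Nonempty) : Fin n :=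
  shiftR i ((s.image (cdistR i)).min' (h.image _))

/-- first site of `s` weakly to the left (cyclically) of `i` -/
noncomputable def firstLeft (i : Fin n) (s : Finset (Fin n)) (h : s.Nonempty) : Fin n :=
  shiftL i ((s.image (cdistL i)).min' (h.image _))

/-- One step of Phase II of the queue algorithm: the state consists of the set of
still-unset sites of the queue together with the partial output word; processing
the letter at site `σ p`, it is placed (unchanged) on the first unset queue site
weakly to the right of `σ p`. -/
noncomputable def step2 (u : Word n) (σ : Equiv.Perm (Fin n))
    (st : Finset (Fin n) × Word n) (p : Fin n) : Finset (Fin n) × Word n :=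
  if h : st.1.Nonempty then
    let j := firstRight (σ p) st.1 h
    (st.1.erase j, Function.update st.2 j (u (σ p)))
  else st

/-- One step of Phase I of the queue algorithm: processing the letter at site `σ p`,
the letter `u (σ p) + 1` is placed on the first unset non-queue site weakly to the
left of `σ p`. -/
noncomputable def step1 (u : Word n) (σ : Equiv.Perm (Fin n))
    (st : Finset (Fin n) × Word n) (p : Fin n) : Finset (Fin n) × Word n :=
  if h : st.1.Nonempty then
    let j := firstLeft (σ p) st.1 h
    (st.1.erase j, Function.update st.2 j (u (σ p) + 1))
  else st

/-- The two-phase queue algorithm computing `q(u)`, using the ordering permutation `σ`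
(so the letters are processed in the order `u (σ 0), u (σ 1), …`): Phase II processes
the `|q|` smallest letters in increasing order, Phase I processes the remaining
letters in decreasing order. -/
noncomputable def queueActWith (q : Finset (Fin n)) (σ : Equiv.Perm (Fin n))
    (u : Word n) : Word n :=
  let s2 := ((List.finRange n).take q.card).foldl (step2 u σ) (q, fun _ => 0)
  let s1 := (((List.finRange n).drop q.card).reverse).foldl (step1 u σ) (qᶜ, s2.2)
  s1.2

/-- `σ` is a valid ordering permutation for the word `u`. -/
def IsSorting (u : Word n) (σ : Equiv.Perm (Fin n)) : Prop := Monotone (u ∘ σ)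

/-- The action `q(u)` of a queue `q` on a word `u`, using the canonical sorting
permutation. -/
noncomputable def act (q : Finset (Fin n)) (u : Word n) : Word n :=
  queueActWith q (Tuple.sort u) u

/-- The action of a tuple of queues `(q_1, …, q_k)` on a word (first `q_1`, then `q_2`, …). -/
noncomputable def mlqAct {k : ℕ} (qs : Fin k → Finset (Fin n)) (u : Word n) : Word n :=
  (List.ofFn qs).foldl (fun w q => act q w) u

end Cyclic

/-- the type of a word: `typeOf u i` is the number of occurrences of the letter `i`. -/
def typeOf (u : Word n) : ℕ → ℕ := fun i => (Finset.univ.filter (fun p => u p = i)).card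

/-- partial sums `p_i(m) = m_1 + ⋯ + m_i` of a type -/
def psum (m : ℕ → ℕ) (i : ℕ) : ℕ := ∑ j ∈ Finset.Icc 1 i, m j

/-- number of classes of a type: the largest `i` with `m i ≠ 0` -/
noncomputable def classes (m : ℕ → ℕ) : ℕ := sSup {i | m i ≠ 0}

/-- a packed word: all classes `1, …, ℓ` occur, where `ℓ` is the number of classes -/
def PackedWord (u : Word n) : Prop :=
  (∀ p, 1 ≤ u p) ∧ ∀ j, 1 ≤ j → j ≤ classes (typeOf u) → typeOf u j ≠ 0

/-- merging classes `i` and `i+1` in a word: all letters `> i` are decremented -/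
def mergeWord (i : ℕ) (u : Word n) : Word n := fun p => if i < u p then u p - 1 else u p

/-- merging classes `i` and `i+1` in a type -/
def mergeType (i : ℕ) (m : ℕ → ℕ) : ℕ → ℕ := fun j =>
  if j < i then m j else if j = i then m i + m (i + 1) else m (j + 1)

/-- `∨^(k)`: decrement all but the `k` smallest letters of a word (meaningful when
`k` is a partial sum of the type of the word). -/
def vee (k : ℕ) (u : Word n) : Word n := fun p =>
  if (Finset.univ.filter (fun q => u q ≤ u p)).card ≤ k then u p else u p - 1

/-- iterated merge `∨_T` (the merges `∨_t` are applied for `t ∈ T` in decreasing order) -/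
def mergeWordT (T : Finset ℕ) (u : Word n) : Word n :=
  (T.sort (· ≤ ·)).foldr mergeWord u

/-- iterated merge `∨_T` on types -/
def mergeTypeT (T : Finset ℕ) (m : ℕ → ℕ) : ℕ → ℕ :=
  (T.sort (· ≤ ·)).foldr mergeType m

/-- the weight of a queue, `∏_{j ∈ q} x_j` -/
noncomputable def qwt (q : Finset (Fin n)) : MvPolynomial (Fin n) ℤ :=
  ∏ j ∈ q, MvPolynomial.X j

/-- the `σ`-twisted spectral weight `⟨u⟩_σ` of a word `u`, with respect to a type `m`
with `k + 1` classes: the sum of the weights of all `σ`-twisted multiline queues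
`(q_1, …, q_k)` of type `m` (i.e. `|q_i| = p_{σ(i)}(m)`) with `u = q(1^n)`. -/
noncomputable def swt [NeZero n] (k : ℕ) (m : ℕ → ℕ) (σ : Equiv.Perm (Fin k))
    (u : Word n) : MvPolynomial (Fin n) ℤ :=
  ∑ qs ∈ Finset.univ.filter (fun qs : Fin k → Finset (Fin n) =>
      (∀ i, (qs i).card = psum m ((σ i : ℕ) + 1)) ∧ mlqAct qs (fun _ => 1) = u),
    ∏ i, qwt (qs i)

/-- the (ordinary) spectral weight `⟨u⟩` of a packed word -/
noncomputable def spec [NeZero n] (u : Word n) : MvPolynomial (Fin n) ℤ :=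
  swt (classes (typeOf u) - 1) (typeOf u) (Equiv.refl _) u

/-- the elementary symmetric polynomial `e_k(x_1, …, x_n)` -/
noncomputable def esym (n k : ℕ) : MvPolynomial (Fin n) ℤ :=
  ∑ t ∈ Finset.powersetCard k (Finset.univ : Finset (Fin n)), ∏ j ∈ t, MvPolynomial.X j

/-- the Gale order `A ⪰ B`: same cardinality, and the `k`-th largest element of `A`
is at least the `k`-th largest element of `B`, for every `k` -/
def Dom (A B : Finset ℕ) : Prop :=
  A.card = B.card ∧ ∀ k < A.card,
    (B.sort (· ≤ ·)).reverse.getD k 0 ≤ (A.sort (· ≤ ·)).reverse.getD k 0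

/-- `A ≫ B`: every element of `A` exceeds every element of `B` -/
def Gg (A B : Finset ℕ) : Prop := ∀ a ∈ A, ∀ b ∈ B, b < a

/-- a word is weakly decreasing up to level `t`: any two sites `p < q` with
`u q ≤ t` satisfy `u p ≥ u q` -/
def WDUpTo (t : ℕ) (u : Word n) : Prop :=
  ∀ p q : Fin n, p < q → u q ≤ t → u q ≤ u p

section Dual

variable [NeZero n]

/-- the cyclic interval `{i, i+1, …, i+t}` -/
def cycInterval (i : Fin n) (t : ℕ) : Finset (Fin n) :=
  (Finset.range (t + 1)).image (shiftR i)

/-- the cyclic interval starting at `i` of length `t` is balanced for the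
configuration `(q₁, q₂)` -/
def BalancedInterval (q1 q2 : Finset (Fin n)) (i : Fin n) (t : ℕ) : Prop :=
  (cycInterval i t ∩ q1).card = (cycInterval i t ∩ q2).card ∧
  ∀ l ≤ t, (cycInterval i l ∩ q2).card ≤ (cycInterval i l ∩ q1).card

/-- a site is balanced if it lies in some balanced interval; equivalently, its
parenthesis (if any) is matched in the cyclic parenthesis-matching of the
configuration -/
def BalancedSite (q1 q2 : Finset (Fin n)) (j : Fin n) : Prop :=
  ∃ i t, t < n ∧ BalancedInterval q1 q2 i t ∧ j ∈ cycInterval i t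

/-- the dual configuration: balanced sites keep their memberships, unbalanced
sites swap their memberships between the two queues -/
noncomputable def dualPair (q1 q2 : Finset (Fin n)) : Finset (Fin n) × Finset (Fin n) :=
  (Finset.univ.filter (fun j => if BalancedSite q1 q2 j then j ∈ q1 else j ∈ q2),
   Finset.univ.filter (fun j => if BalancedSite q1 q2 j then j ∈ q2 else j ∈ q1))

/-- the operator `s_i` on tuples of queues, replacing the (0-indexed) adjacent pair
`(q_i, q_{i+1})` by its dual configuration -/
noncomputable def sOp {k : ℕ} (i : ℕ) (qs : Fin k → Finset (Fin n)) :
    Fin k → Finset (Fin n) := fun j =>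
  if h : i + 1 < k then
    (if j.val = i then (dualPair (qs ⟨i, by omega⟩) (qs ⟨i + 1, h⟩)).1
     else if j.val = i + 1 then (dualPair (qs ⟨i, by omega⟩) (qs ⟨i + 1, h⟩)).2
     else qs j)
  else qs j

end Dual


section AuxWD

variable [NeZero n]

-- AUX
lemma cdistR_lt' (i j : Fin n) : cdistR i j < n := Nat.mod_lt _ (Nat.pos_of_ne_zero (NeZero.ne n))

lemma shiftR_cdistR' (i j : Fin n) : shiftR i (cdistR i j) = j := by
  apply Fin.ext
  show (i.val + (j.val + n - i.val) % n) % n = j.val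
  rw [Nat.add_mod_mod]
  have h : i.val + (j.val + n - i.val) = j.val + n := by have := i.isLt; omega
  rw [h, Nat.add_mod_right, Nat.mod_eq_of_lt j.isLt]

lemma cdistR_shiftR' (i : Fin n) (d : ℕ) (hd : d < n) : cdistR i (shiftR i d) = d := by
  show ((i.val + d) % n + n - i.val) % n = d
  have hi := i.isLt
  rcases Nat.lt_or_ge (i.val + d) n with h | h
  · rw [Nat.mod_eq_of_lt h]
    have : i.val + d + n - i.val = d + n := by omega
    rw [this, Nat.add_mod_right, Nat.mod_eq_of_lt hd]
  · have h1 : (i.val + d) % n = i.val + d - n := by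
      rw [Nat.mod_eq_sub_mod h]; exact Nat.mod_eq_of_lt (by omega)
    rw [h1]
    have : i.val + d - n + n - i.val = d := by omega
    rw [this, Nat.mod_eq_of_lt hd]

omit [NeZero n] in
lemma cdistR_of_le' {i j : Fin n} (h : i.val ≤ j.val) : cdistR i j = j.val - i.val := by
  show (j.val + n - i.val) % n = j.val - i.val
  have : j.val + n - i.val = n + (j.val - i.val) := by omega
  rw [this, Nat.add_mod_left, Nat.mod_eq_of_lt (by have := j.isLt; omega)]

omit [NeZero n] in
lemma cdistR_of_gt' {i j : Fin n} (h : j.val < i.val) : cdistR i j = j.val + n - i.val :=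
  Nat.mod_eq_of_lt (by have := i.isLt; omega)

lemma shiftL_cdistL' (i j : Fin n) : shiftL i (cdistL i j) = j := by
  apply Fin.ext
  show (i.val + n - ((i.val + n - j.val) % n) % n) % n = j.val
  have hi := i.isLt; have hj := j.isLt
  rw [Nat.mod_mod_of_dvd _ dvd_rfl]
  rcases Nat.lt_or_ge (i.val + n - j.val) n with h | h
  · rw [Nat.mod_eq_of_lt h]
    have : i.val + n - (i.val + n - j.val) = j.val := by omega
    rw [this, Nat.mod_eq_of_lt hj]
  · have h1 : (i.val + n - j.val) % n = i.val + n - j.val - n := by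
      rw [Nat.mod_eq_sub_mod h]; exact Nat.mod_eq_of_lt (by omega)
    rw [h1]
    have : i.val + n - (i.val + n - j.val - n) = j.val + n := by omega
    rw [this, Nat.add_mod_right, Nat.mod_eq_of_lt hj]

lemma firstRight_mem' (i : Fin n) (s : Finset (Fin n)) (h : s.Nonempty) :
    firstRight i s h ∈ s := by
  obtain ⟨j, hj, hd⟩ := Finset.mem_image.mp ((s.image (cdistR i)).min'_mem (h.image _))
  unfold firstRight
  rw [← hd, shiftR_cdistR']
  exact hj

lemma firstRight_min' (i : Fin n) (s : Finset (Fin n)) (h : s.Nonempty) {j : Fin n}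
    (hj : j ∈ s) : cdistR i (firstRight i s h) ≤ cdistR i j := by
  obtain ⟨j0, hj0, hd⟩ := Finset.mem_image.mp ((s.image (cdistR i)).min'_mem (h.image _))
  unfold firstRight
  rw [← hd, shiftR_cdistR']
  have := Finset.min'_le (s.image (cdistR i)) _ (Finset.mem_image_of_mem (cdistR i) hj)
  rw [← hd] at this
  exact this

lemma firstLeft_mem' (i : Fin n) (s : Finset (Fin n)) (h : s.Nonempty) :
    firstLeft i s h ∈ s := by
  obtain ⟨j, hj, hd⟩ := Finset.mem_image.mp ((s.image (cdistL i)).min'_mem (h.image _))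
  unfold firstLeft
  rw [← hd, shiftL_cdistL']
  exact hj

section Fold
variable {f : Finset (Fin n) × Word n → Fin n → Finset (Fin n) × Word n} {vals : Fin n → ℕ}

omit [NeZero n] in
lemma fold_basic
    (hf : ∀ st p, st.1.Nonempty →
      ∃ j ∈ st.1, f st p = (st.1.erase j, Function.update st.2 j (vals p)))
    (hf0 : ∀ st p, ¬ st.1.Nonempty → f st p = st)
    (l : List (Fin n)) (st : Finset (Fin n) × Word n) :
    (l.foldl f st).1 ⊆ st.1 ∧ ∀ j ∉ st.1, (l.foldl f st).2 j = st.2 j := by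
  induction l generalizing st with
  | nil => exact ⟨Finset.Subset.refl _, fun _ _ => rfl⟩
  | cons p l ih =>
    rw [List.foldl_cons]
    by_cases h : st.1.Nonempty
    · obtain ⟨j0, hj0, heq⟩ := hf st p h
      rw [heq]
      obtain ⟨h1, h2⟩ := ih (st.1.erase j0, Function.update st.2 j0 (vals p))
      refine ⟨h1.trans (Finset.erase_subset _ _), fun j hj => ?_⟩
      rw [h2 j (fun hm => hj (Finset.mem_of_mem_erase hm))]
      exact Function.update_of_ne (fun hje : j = j0 => hj (hje ▸ hj0)) _ _
    · rw [hf0 st p h]; exact ih st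

omit [NeZero n] in
lemma fold_card
    (hf : ∀ st p, st.1.Nonempty →
      ∃ j ∈ st.1, f st p = (st.1.erase j, Function.update st.2 j (vals p)))
    (l : List (Fin n)) (st : Finset (Fin n) × Word n) (h : l.length ≤ st.1.card) :
    (l.foldl f st).1.card = st.1.card - l.length := by
  induction l generalizing st with
  | nil => simp
  | cons p l ih =>
    simp only [List.length_cons] at h
    have hne : st.1.Nonempty := Finset.card_pos.mp (by omega)
    obtain ⟨j0, hj0, heq⟩ := hf st p hne
    rw [List.foldl_cons, heq,
      ih _ (by rw [Finset.card_erase_of_mem hj0]; omega)]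
    rw [Finset.card_erase_of_mem hj0]
    simp only [List.length_cons]
    omega

omit [NeZero n] in
lemma fold_surj
    (hf : ∀ st p, st.1.Nonempty →
      ∃ j ∈ st.1, f st p = (st.1.erase j, Function.update st.2 j (vals p)))
    (hf0 : ∀ st p, ¬ st.1.Nonempty → f st p = st)
    (l : List (Fin n)) (st : Finset (Fin n) × Word n) (h : l.length ≤ st.1.card) :
    ∀ p ∈ l, ∃ j ∈ st.1, (l.foldl f st).2 j = vals p := by
  induction l generalizing st with
  | nil => simp
  | cons p0 l ih =>
    simp only [List.length_cons] at h
    have hne : st.1.Nonempty := Finset.card_pos.mp (by omega)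
    obtain ⟨j0, hj0, heq⟩ := hf st p0 hne
    intro p hp
    rw [List.foldl_cons, heq]
    rcases List.mem_cons.mp hp with rfl | hp
    · refine ⟨j0, hj0, ?_⟩
      rw [(fold_basic hf hf0 l _).2 j0 (Finset.notMem_erase _ _)]
      simp
    · obtain ⟨j, hj, hval⟩ := ih (st.1.erase j0, Function.update st.2 j0 (vals p0))
        (by rw [Finset.card_erase_of_mem hj0]; omega) p hp
      exact ⟨j, Finset.mem_of_mem_erase hj, hval⟩

omit [NeZero n] in
lemma fold_filled
    (hf : ∀ st p, st.1.Nonempty →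
      ∃ j ∈ st.1, f st p = (st.1.erase j, Function.update st.2 j (vals p)))
    (hf0 : ∀ st p, ¬ st.1.Nonempty → f st p = st)
    (l : List (Fin n)) (st : Finset (Fin n) × Word n) :
    ∀ j ∈ st.1, j ∉ (l.foldl f st).1 → ∃ p ∈ l, (l.foldl f st).2 j = vals p := by
  induction l generalizing st with
  | nil => intro j hj hnj; exact absurd hj hnj
  | cons p0 l ih =>
    intro j hj hnj
    rw [List.foldl_cons] at hnj ⊢
    by_cases h : st.1.Nonempty
    · obtain ⟨j0, hj0, heq⟩ := hf st p0 h
      rw [heq] at hnj ⊢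
      by_cases hjj : j = j0
      · subst hjj
        refine ⟨p0, List.mem_cons_self, ?_⟩
        rw [(fold_basic hf hf0 l _).2 j (Finset.notMem_erase _ _)]
        simp
      · obtain ⟨p, hp, hval⟩ := ih _ j (Finset.mem_erase.mpr ⟨hjj, hj⟩) hnj
        exact ⟨p, List.mem_cons_of_mem _ hp, hval⟩
    · rw [hf0 st p0 h] at hnj ⊢
      obtain ⟨p, hp, hval⟩ := ih st j hj hnj
      exact ⟨p, List.mem_cons_of_mem _ hp, hval⟩

end Fold

lemma step2_hf (u : Word n) (σ : Equiv.Perm (Fin n)) :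
    ∀ (st : Finset (Fin n) × Word n) p, st.1.Nonempty →
      ∃ j ∈ st.1, step2 u σ st p =
        (st.1.erase j, Function.update st.2 j (u (σ p))) := by
  intro st p h
  exact ⟨firstRight (σ p) st.1 h, firstRight_mem' _ _ _, by simp [step2, dif_pos h]⟩

lemma step2_hf0 (u : Word n) (σ : Equiv.Perm (Fin n)) :
    ∀ (st : Finset (Fin n) × Word n) p, ¬ st.1.Nonempty → step2 u σ st p = st := by
  intro st p h; simp [step2, dif_neg h]

lemma step1_hf (u : Word n) (σ : Equiv.Perm (Fin n)) :
    ∀ (st : Finset (Fin n) × Word n) p, st.1.Nonempty →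
      ∃ j ∈ st.1, step1 u σ st p =
        (st.1.erase j, Function.update st.2 j (u (σ p) + 1)) := by
  intro st p h
  exact ⟨firstLeft (σ p) st.1 h, firstLeft_mem' _ _ _, by simp [step1, dif_pos h]⟩

lemma step1_hf0 (u : Word n) (σ : Equiv.Perm (Fin n)) :
    ∀ (st : Finset (Fin n) × Word n) p, ¬ st.1.Nonempty → step1 u σ st p = st := by
  intro st p h; simp [step1, dif_neg h]

lemma step2_firstRight (u : Word n) (σ : Equiv.Perm (Fin n))
    {st : Finset (Fin n) × Word n} {p : Fin n} (h : st.1.Nonempty) :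
    step2 u σ st p = (st.1.erase (firstRight (σ p) st.1 h),
      Function.update st.2 (firstRight (σ p) st.1 h) (u (σ p))) := by
  simp [step2, dif_pos h]

section Fst
variable (u : Word n) (σ : Equiv.Perm (Fin n)) (q : Finset (Fin n))

/-- state of phase II after `i` steps -/
noncomputable def Fst (i : ℕ) : Finset (Fin n) × Word n :=
  ((List.finRange n).take i).foldl (step2 u σ) (q, fun _ => 0)

lemma Fst_zero : Fst u σ q 0 = (q, fun _ => 0) := rfl

lemma Fst_succ (i : ℕ) (hi : i < n) :
    Fst u σ q (i + 1) = step2 u σ (Fst u σ q i) ⟨i, hi⟩ := by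
  unfold Fst
  rw [List.take_succ]
  have h : (List.finRange n)[i]? = some ⟨i, hi⟩ := by
    rw [List.getElem?_eq_getElem (by simpa using hi)]
    simp [List.getElem_finRange, Fin.cast]
  rw [h, List.foldl_append]
  rfl

lemma Fst_as (i m : ℕ) (him : i ≤ m) :
    Fst u σ q m = (((List.finRange n).take m).drop i).foldl (step2 u σ) (Fst u σ q i) := by
  unfold Fst
  conv_lhs => rw [← List.take_append_drop i ((List.finRange n).take m),
    List.take_take, min_eq_left him]
  rw [List.foldl_append]

lemma take_length' (i : ℕ) (hi : i ≤ n) : ((List.finRange n).take i).length = i := by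
  simp [List.length_take]; omega

lemma Fst_card (hq : q.card ≤ n) {i : ℕ} (hi : i ≤ q.card) :
    (Fst u σ q i).1.card = q.card - i := by
  have := fold_card (step2_hf u σ) ((List.finRange n).take i) (q, fun _ => 0)
    (by rw [take_length' (i := i) (le_trans hi hq)]; exact hi)
  rwa [take_length' (i := i) (le_trans hi hq)] at this

lemma Fst_mono {i m : ℕ} (him : i ≤ m) :
    (Fst u σ q m).1 ⊆ (Fst u σ q i).1 := by
  rw [Fst_as u σ q i m him]
  exact (fold_basic (step2_hf u σ) (step2_hf0 u σ) _ _).1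

lemma Fst_persist {i m : ℕ} (him : i ≤ m) {j : Fin n} (hj : j ∉ (Fst u σ q i).1) :
    (Fst u σ q m).2 j = (Fst u σ q i).2 j := by
  rw [Fst_as u σ q i m him]
  exact (fold_basic (step2_hf u σ) (step2_hf0 u σ) _ _).2 j hj

lemma Fst_nonempty (hq : q.card ≤ n) {i : ℕ} (hi : i < q.card) :
    (Fst u σ q i).1.Nonempty := by
  apply Finset.card_pos.mp
  rw [Fst_card u σ q hq (le_of_lt hi)]
  omega

/-- the site filled at step `i` of phase II -/
noncomputable def js (i : ℕ) : Fin n :=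
  if h : (Fst u σ q i).1.Nonempty ∧ i < n then
    firstRight (σ ⟨i, h.2⟩) (Fst u σ q i).1 h.1
  else ⟨0, Nat.pos_of_ne_zero (NeZero.ne n)⟩

lemma js_spec (hq : q.card ≤ n) {i : ℕ} (hi : i < q.card) (hin : i < n) :
    js u σ q i ∈ (Fst u σ q i).1 ∧
    (∀ j ∈ (Fst u σ q i).1, cdistR (σ ⟨i, hin⟩) (js u σ q i) ≤ cdistR (σ ⟨i, hin⟩) j) ∧
    Fst u σ q (i + 1) = ((Fst u σ q i).1.erase (js u σ q i),
      Function.update (Fst u σ q i).2 (js u σ q i) (u (σ ⟨i, hin⟩))) := by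
  have hne := Fst_nonempty u σ q hq hi
  have hcond : (Fst u σ q i).1.Nonempty ∧ i < n := ⟨hne, hin⟩
  have hjs : js u σ q i = firstRight (σ ⟨i, hin⟩) (Fst u σ q i).1 hne := by
    rw [js, dif_pos hcond]
  refine ⟨hjs ▸ firstRight_mem' _ _ _, fun j hj => hjs ▸ firstRight_min' _ _ _ hj, ?_⟩
  rw [Fst_succ u σ q i hin, step2_firstRight u σ hne, hjs]

lemma Fst_final_val (hq : q.card ≤ n) {i : ℕ} (hi : i < q.card) (hin : i < n) :
    (Fst u σ q q.card).2 (js u σ q i) = u (σ ⟨i, hin⟩) := by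
  obtain ⟨hmem, hmin, hsucc⟩ := js_spec u σ q hq hi hin
  have h2 : js u σ q i ∉ (Fst u σ q (i + 1)).1 := by
    rw [hsucc]; exact Finset.notMem_erase _ _
  rw [Fst_persist u σ q (Nat.succ_le_of_lt hi) h2, hsucc]
  simp

lemma js_surj (hq : q.card ≤ n) {j : Fin n} (hj : j ∈ q) :
    ∃ i, ∃ hi : i < q.card, js u σ q i = j := by
  by_contra hcon
  push_neg at hcon
  have key : ∀ i ≤ q.card, j ∈ (Fst u σ q i).1 := by
    intro i hi
    induction i with
    | zero => exact hj
    | succ i ih =>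
      have hik : i < q.card := hi
      obtain ⟨hmem, hmin, hsucc⟩ := js_spec u σ q hq hik (lt_of_lt_of_le hik hq)
      rw [hsucc]
      exact Finset.mem_erase.mpr ⟨fun he => hcon i hik he.symm, ih (le_of_lt hik)⟩
  have h1 := key q.card le_rfl
  have hcard := Fst_card u σ q hq (le_refl q.card)
  rw [Nat.sub_self, Finset.card_eq_zero] at hcard
  rw [hcard] at h1
  exact absurd h1 (Finset.notMem_empty j)

end Fst

end AuxWD

/-- If `q(u)` has at least one letter equal to `t`, is weakly decreasing up to level `t`,
and has exactly `|q|` letters that are at most `t`, then `u` is weakly decreasing up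
to level `t - 1`. -/
theorem wd_of_queue_act {n t : ℕ} [NeZero n] (ht : 0 < t) (u : Word n)
    (q : Finset (Fin n))
    (h1 : ∃ p, act q u p = t)
    (h2 : WDUpTo t (act q u))
    (h3 : (Finset.univ.filter (fun p => act q u p ≤ t)).card = q.card) :
    WDUpTo (t - 1) u := by
  classical
  set σ := Tuple.sort u with hσdef
  have hq : q.card ≤ n := by
    have := Finset.card_le_univ q
    simpa using this
  have hmono : Monotone (u ∘ σ) := Tuple.monotone_sort u
  have hact : act q u = ((((List.finRange n).drop q.card).reverse).foldl (step1 u σ)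
      (qᶜ, (Fst u σ q q.card).2)).2 := rfl
  have hlen1 : (((List.finRange n).drop q.card).reverse).length = n - q.card := by simp
  have hcompl : (qᶜ : Finset (Fin n)).card = n - q.card := by simp [Finset.card_compl]
  have hlen2 : ((List.finRange n).drop q.card).length = n - q.card := by simp
  -- characterization of values off q
  have c_val : ∀ j, j ∉ q → ∃ i, ∃ hin : i < n, q.card ≤ i ∧
      act q u j = u (σ ⟨i, hin⟩) + 1 := by
    intro j hj
    have hjc : j ∈ qᶜ := Finset.mem_compl.mpr hj
    have hres : ((((List.finRange n).drop q.card).reverse).foldl (step1 u σ)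
        (qᶜ, (Fst u σ q q.card).2)).1.card = 0 := by
      rw [fold_card (step1_hf u σ) _ _ (by rw [hlen1, hcompl]), hlen1, hcompl]
      omega
    have hnmem : j ∉ ((((List.finRange n).drop q.card).reverse).foldl (step1 u σ)
        (qᶜ, (Fst u σ q q.card).2)).1 := by
      rw [Finset.card_eq_zero] at hres
      rw [hres]
      exact Finset.notMem_empty j
    obtain ⟨pp, hp, hval⟩ := fold_filled (step1_hf u σ) (step1_hf0 u σ) _ _ j hjc hnmem
    rw [List.mem_reverse] at hp
    obtain ⟨idx, hidx, hpe⟩ := List.mem_iff_getElem.mp hp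
    have hkidx : q.card + idx < n := by rw [hlen2] at hidx; omega
    have hpeq : pp = ⟨q.card + idx, hkidx⟩ := by
      rw [← hpe, List.getElem_drop]
      simp [List.getElem_finRange, Fin.cast]
    refine ⟨q.card + idx, hkidx, Nat.le_add_right _ _, ?_⟩
    rw [hact, hval, hpeq]
  have c_surj : ∀ i (hin : i < n), q.card ≤ i →
      ∃ j, j ∉ q ∧ act q u j = u (σ ⟨i, hin⟩) + 1 := by
    intro i hin hki
    have hmem : (⟨i, hin⟩ : Fin n) ∈ ((List.finRange n).drop q.card).reverse := by
      rw [List.mem_reverse]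
      apply List.mem_iff_getElem.mpr
      refine ⟨i - q.card, by rw [hlen2]; omega, ?_⟩
      rw [List.getElem_drop]
      simp only [List.getElem_finRange, Fin.cast]
      apply Fin.ext
      simp
      omega
    obtain ⟨j, hj, hval⟩ := fold_surj (step1_hf u σ) (step1_hf0 u σ) _
      (qᶜ, (Fst u σ q q.card).2) (by rw [hlen1, hcompl]) _ hmem
    exact ⟨j, fun hjq => (Finset.mem_compl.mp hj) hjq, by rw [hact, hval]⟩
  have act_on_q : ∀ j ∈ q, act q u j = (Fst u σ q q.card).2 j := by
    intro j hj
    rw [hact]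
    exact (fold_basic (step1_hf u σ) (step1_hf0 u σ) _ _).2 j (by simp [hj])
  have js_in_q : ∀ i, i < q.card → js u σ q i ∈ q := by
    intro i hi
    have h0 : (Fst u σ q 0).1 = q := rfl
    have := Fst_mono u σ q (Nat.zero_le i)
      (js_spec u σ q hq hi (lt_of_lt_of_le hi hq)).1
    rwa [h0] at this
  have act_js : ∀ i (hi : i < q.card) (hin : i < n),
      act q u (js u σ q i) = u (σ ⟨i, hin⟩) := by
    intro i hi hin
    rw [act_on_q _ (js_in_q i hi), Fst_final_val u σ q hq hi hin]
  have q_val : ∀ j ∈ q, ∃ i, ∃ hin : i < n, i < q.card ∧ act q u j = u (σ ⟨i, hin⟩) := by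
    intro j hj
    obtain ⟨i, hi, hji⟩ := js_surj u σ q hq hj
    exact ⟨i, lt_of_lt_of_le hi hq, hi, by rw [← hji, act_js i hi _]⟩
  -- Claim 1 : all q-site values are ≤ t
  have claim1 : ∀ j ∈ q, act q u j ≤ t := by
    by_contra hcon
    push_neg at hcon
    obtain ⟨j0, hj0, hgt⟩ := hcon
    obtain ⟨i0, hin0, hi0, hval0⟩ := q_val j0 hj0
    have hsub : Finset.univ.filter (fun p => act q u p ≤ t) ⊆ q.erase j0 := by
      intro j hjf
      rw [Finset.mem_filter] at hjf
      by_cases hjq : j ∈ q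
      · exact Finset.mem_erase.mpr ⟨fun he => by rw [he] at hjf; omega, hjq⟩
      · exfalso
        obtain ⟨i, hin, hki, hval⟩ := c_val j hjq
        have hle : u (σ ⟨i0, hin0⟩) ≤ u (σ ⟨i, hin⟩) := by
          have := hmono (show (⟨i0, hin0⟩ : Fin n) ≤ ⟨i, hin⟩ from by
            rw [Fin.mk_le_mk]; omega)
          simpa using this
        rw [hval] at hjf
        rw [hval0] at hgt
        omega
    have hcard := Finset.card_le_card hsub
    rw [h3, Finset.card_erase_of_mem hj0] at hcard
    have : 0 < q.card := Finset.card_pos.mpr ⟨j0, hj0⟩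
    omega
  have hfq : q = Finset.univ.filter (fun p => act q u p ≤ t) := by
    apply Finset.eq_of_subset_of_card_le
    · intro j hj
      exact Finset.mem_filter.mpr ⟨Finset.mem_univ j, claim1 j hj⟩
    · exact le_of_eq h3
  have claim2 : ∀ j, act q u j ≤ t → j ∈ q := by
    intro j hjt
    rw [hfq]
    exact Finset.mem_filter.mpr ⟨Finset.mem_univ j, hjt⟩
  have claimA : ∀ i (hin : i < n), q.card ≤ i → t ≤ u (σ ⟨i, hin⟩) := by
    intro i hin hki
    obtain ⟨j, hjq, hval⟩ := c_surj i hin hki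
    by_contra hlt
    push_neg at hlt
    exact hjq (claim2 j (by rw [hval]; omega))
  -- main argument
  intro p p' hpp' hup'
  by_contra hcon
  push_neg at hcon
  have hσp : σ (σ.symm p) = p := Equiv.apply_symm_apply σ p
  have hσp' : σ (σ.symm p') = p' := Equiv.apply_symm_apply σ p'
  set i := σ.symm p with hidef
  set m := σ.symm p' with hmdef
  have hmk : (m : ℕ) < q.card := by
    by_contra hge
    push_neg at hge
    have := claimA m.val m.isLt hge
    rw [Fin.eta, hσp'] at this
    omega
  have him : (i : ℕ) < (m : ℕ) := by
    by_contra hle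
    push_neg at hle
    have := hmono (show m ≤ i from (Fin.le_def).mpr hle)
    simp only [Function.comp_apply, hσp, hσp'] at this
    omega
  have hik : (i : ℕ) < q.card := lt_trans him hmk
  obtain ⟨jamem, jamin, jasucc⟩ := js_spec u σ q hq hik i.isLt
  obtain ⟨jbmem, jbmin, jbsucc⟩ := js_spec u σ q hq hmk m.isLt
  set ja := js u σ q i.val with hjadef
  set jb := js u σ q m.val with hjbdef
  have hja_val : act q u ja = u p := by
    rw [hjadef, act_js i.val hik i.isLt, Fin.eta, hσp]
  have hjb_val : act q u jb = u p' := by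
    rw [hjbdef, act_js m.val hmk m.isLt, Fin.eta, hσp']
  have hjb_in_i1 : jb ∈ (Fst u σ q (i.val + 1)).1 :=
    Fst_mono u σ q (by omega) jbmem
  have hjb_ne_ja : jb ≠ ja := by
    rw [jasucc] at hjb_in_i1
    exact (Finset.mem_erase.mp hjb_in_i1).1
  have hjb_in_i : jb ∈ (Fst u σ q i.val).1 := by
    have := Fst_mono u σ q (show (i.val : ℕ) ≤ i.val + 1 by omega) hjb_in_i1
    exact this
  have hlt_ba : (jb : ℕ) < (ja : ℕ) := by
    rcases Nat.lt_or_ge jb.val ja.val with h | h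
    · exact h
    · exfalso
      have hja_lt_jb : ja < jb := by
        rw [Fin.lt_def]
        rcases Nat.lt_or_ge ja.val jb.val with h' | h'
        · exact h'
        · exact absurd (Fin.ext (by omega : ja.val = jb.val)).symm hjb_ne_ja
      have := h2 ja jb hja_lt_jb (by rw [hjb_val]; omega)
      rw [hja_val, hjb_val] at this
      omega
  obtain ⟨pt, hpt⟩ := h1
  have hptq : pt ∈ q := claim2 pt (le_of_eq hpt)
  obtain ⟨r, hr, hjr⟩ := js_surj u σ q hq hptq
  have hrval : u (σ ⟨r, lt_of_lt_of_le hr hq⟩) = t := by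
    rw [← act_js r hr (lt_of_lt_of_le hr hq), hjr, hpt]
  have hmr : (m : ℕ) < r := by
    by_contra hle
    push_neg at hle
    have := hmono (show (⟨r, lt_of_lt_of_le hr hq⟩ : Fin n) ≤ m from by
      rw [Fin.le_def]; exact hle)
    simp only [Function.comp_apply, hσp'] at this
    rw [hrval] at this
    omega
  have hjr_in : pt ∈ (Fst u σ q (m.val + 1)).1 :=
    Fst_mono u σ q (by omega) (hjr ▸ (js_spec u σ q hq hr (lt_of_lt_of_le hr hq)).1)
  have hjr_ne_jb : pt ≠ jb := by
    rw [jbsucc] at hjr_in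
    exact (Finset.mem_erase.mp hjr_in).1
  have hjr_in_m : pt ∈ (Fst u σ q m.val).1 :=
    Fst_mono u σ q (show (m.val : ℕ) ≤ m.val + 1 by omega) hjr_in
  have hmin_i := jamin jb hjb_in_i
  have hmin_m := jbmin pt hjr_in_m
  rw [Fin.eta, hσp] at hmin_i
  rw [Fin.eta, hσp'] at hmin_m
  have hpv := p.isLt
  have hp'v := p'.isLt
  have hptv := pt.isLt
  have hppv : (p : ℕ) < (p' : ℕ) := hpp'
  rcases Nat.lt_or_ge jb.val p'.val with hcase | hcase
  · -- wrap case
    rw [cdistR_of_gt' hcase] at hmin_m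
    rcases Nat.lt_or_ge pt.val p'.val with hc2 | hc2
    · rw [cdistR_of_gt' hc2] at hmin_m
      have hjbpt : jb < pt := by
        rw [Fin.lt_def]
        have hle' : jb.val ≤ pt.val := by omega
        rcases hle'.lt_or_eq with h | h
        · exact h
        · exact absurd (Fin.ext h).symm hjr_ne_jb
      have := h2 jb pt hjbpt (le_of_eq hpt)
      rw [hpt, hjb_val] at this
      omega
    · rw [cdistR_of_le' hc2] at hmin_m
      omega
  · -- no-wrap case
    have hA : (p : ℕ) ≤ ja.val := by omega
    have hB : (p : ℕ) ≤ jb.val := by omega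
    rw [cdistR_of_le' hA, cdistR_of_le' hB] at hmin_i
    omega

end MLQ
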